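/- For every r > 0 and every polynomial P of degree at most n with sup norm at most 1 on the closed unit disk, and every z on the unit circle, the mean value (1/2π)∫₀^{2π} |P(z + r e^{iθ})|² dθ is at most ∑_{k=0}^n (C(n,k))² r^{2k}, with equality for P(z) = z^n. -/

import Mathlib

open Polynomial Real intervalIntegral

lemma intexp (m : ℤ) : ∫ t in (0:ℝ)..(2*π), Complex.exp (m * t * Complex.I)
    = if m = 0 then (2*π:ℂ) else 0 := by
  split_ifs with h
  · simp [h]
  · have hc : (m : ℂ) * Complex.I ≠ 0 := by
      simp [Complex.ext_iff, h]
    have hint := integral_exp_mul_complex (a := 0) (b := 2*π) hc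
    have heq : ∀ t : ℝ, Complex.exp ((m:ℂ) * t * Complex.I)
        = Complex.exp ((m:ℂ) * Complex.I * t) := by
      intro t; ring_nf
    simp_rw [heq]
    rw [hint]
    have h1 : Complex.exp ((m:ℂ) * Complex.I * ((2*π:ℝ):ℂ)) = 1 := by
      rw [← Complex.exp_int_mul_two_pi_mul_I m]
      congr 1
      push_cast
      ring
    rw [h1]
    simp

lemma orth (a b : ℕ) : (∫ t in (0:ℝ)..(2*π),
    Complex.exp (a*t*Complex.I) * (starRingEnd ℂ) (Complex.exp (b*t*Complex.I)))
    = if a = b then (2*π:ℂ) else 0 := by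
  have hpt : ∀ t : ℝ, Complex.exp (a*t*Complex.I) * (starRingEnd ℂ) (Complex.exp (b*t*Complex.I))
      = Complex.exp (((((a:ℤ) - (b:ℤ)) : ℤ) : ℂ) * t * Complex.I) := by
    intro t
    rw [← Complex.exp_conj, ← Complex.exp_add]
    congr 1
    simp only [map_mul, Complex.conj_I, Complex.conj_ofReal, map_natCast]
    push_cast
    ring
  simp_rw [hpt]
  rw [intexp]
  have : ((a:ℤ) - b = 0) ↔ a = b := by omega
  simp [this]

lemma parseval (Q : Polynomial ℂ) (n : ℕ) (hQ : Q.natDegree ≤ n) (r : ℝ) :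
    ∫ θ in (0:ℝ)..(2*π), ‖Q.eval ((r:ℂ) * Complex.exp (θ * Complex.I))‖ ^ 2
      = 2*π * ∑ k ∈ Finset.range (n+1), ‖Q.coeff k‖^2 * r^(2*k) := by
  set N := n+1 with hN
  set c : ℕ → ℂ := fun k => Q.coeff k * ((r:ℝ)^k : ℝ) with hc
  have hF : ∀ θ : ℝ, Q.eval ((r:ℂ) * Complex.exp (θ * Complex.I))
      = ∑ k ∈ Finset.range N, c k * Complex.exp (k*θ*Complex.I) := by
    intro θ
    rw [Polynomial.eval_eq_sum_range' (lt_of_le_of_lt hQ (Nat.lt_succ_self n))]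
    refine Finset.sum_congr rfl fun k _ => ?_
    rw [mul_pow, ← Complex.exp_nat_mul, ← mul_assoc, hc]
    push_cast
    ring_nf
  have hprod : ∀ θ : ℝ, ((‖Q.eval ((r:ℂ) * Complex.exp (θ * Complex.I))‖^2 : ℝ) : ℂ)
      = ∑ j ∈ Finset.range N, ∑ l ∈ Finset.range N,
          (c j * (starRingEnd ℂ) (c l)) *
            (Complex.exp (j*θ*Complex.I) * (starRingEnd ℂ) (Complex.exp (l*θ*Complex.I))) := by
    intro θ
    have h1 : ((‖Q.eval ((r:ℂ) * Complex.exp (θ * Complex.I))‖^2 : ℝ) : ℂ)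
        = Q.eval ((r:ℂ) * Complex.exp (θ * Complex.I)) *
          (starRingEnd ℂ) (Q.eval ((r:ℂ) * Complex.exp (θ * Complex.I))) := by
      rw [Complex.mul_conj, Complex.normSq_eq_norm_sq]
    rw [h1, hF θ, map_sum, Finset.sum_mul_sum]
    refine Finset.sum_congr rfl fun j _ => Finset.sum_congr rfl fun l _ => ?_
    rw [map_mul]
    ring
  have hcont : ∀ (j l : ℕ), Continuous (fun θ : ℝ =>
      (c j * (starRingEnd ℂ) (c l)) *
        (Complex.exp (j*θ*Complex.I) * (starRingEnd ℂ) (Complex.exp (l*θ*Complex.I)))) := by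
    intro j l
    have he : ∀ m : ℕ, Continuous fun θ : ℝ => Complex.exp (m*θ*Complex.I) := by
      intro m; fun_prop
    exact continuous_const.mul ((he j).mul (continuous_star.comp (he l)))
  have hci : (∫ θ in (0:ℝ)..(2*π),
        ((‖Q.eval ((r:ℂ) * Complex.exp (θ * Complex.I))‖^2 : ℝ) : ℂ))
      = ∑ j ∈ Finset.range N, ∑ l ∈ Finset.range N, (c j * (starRingEnd ℂ) (c l)) *
          ∫ θ in (0:ℝ)..(2*π),
            (Complex.exp (j*θ*Complex.I) * (starRingEnd ℂ) (Complex.exp (l*θ*Complex.I))) := by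
    simp_rw [hprod]
    rw [intervalIntegral.integral_finset_sum]
    · refine Finset.sum_congr rfl fun j _ => ?_
      rw [intervalIntegral.integral_finset_sum]
      · exact Finset.sum_congr rfl fun l _ => intervalIntegral.integral_const_mul _ _
      · exact fun l _ => ((hcont j l)).intervalIntegrable _ _
    · intro j _
      apply Continuous.intervalIntegrable
      exact continuous_finset_sum _ fun l _ => hcont j l
  have hval : (∫ θ in (0:ℝ)..(2*π),
        ((‖Q.eval ((r:ℂ) * Complex.exp (θ * Complex.I))‖^2 : ℝ) : ℂ))
      = ((2*π * ∑ k ∈ Finset.range N, ‖Q.coeff k‖^2 * r^(2*k) : ℝ) : ℂ) := by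
    rw [hci]
    have hterm : ∀ j ∈ Finset.range N, (∑ l ∈ Finset.range N, (c j * (starRingEnd ℂ) (c l)) *
        ∫ θ in (0:ℝ)..(2*π),
          (Complex.exp (j*θ*Complex.I) * (starRingEnd ℂ) (Complex.exp (l*θ*Complex.I))))
        = ((‖Q.coeff j‖^2 * r^(2*j) : ℝ) : ℂ) * ((2*π:ℝ) : ℂ) := by
      intro j hj
      simp_rw [orth]
      rw [Finset.sum_eq_single j (fun l _ hl => by rw [if_neg (fun h => hl h.symm), mul_zero])
        (fun h => absurd hj h)]
      rw [if_pos rfl, Complex.mul_conj]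
      have hn : Complex.normSq (c j) = ‖Q.coeff j‖^2 * r^(2*j) := by
        rw [hc]
        simp only
        rw [Complex.normSq_eq_norm_sq]
        simp only [norm_mul, Complex.norm_real, Real.norm_eq_abs]
        rw [mul_pow, _root_.sq_abs, ← pow_mul, mul_comm j 2]
      rw [hn]
      push_cast
      ring
    rw [Finset.sum_congr rfl hterm]
    push_cast
    rw [← Finset.sum_mul]
    ring
  have h2 : ((∫ θ in (0:ℝ)..(2*π),
        ‖Q.eval ((r:ℂ) * Complex.exp (θ * Complex.I))‖^2 : ℝ) : ℂ)
      = ((2*π * ∑ k ∈ Finset.range N, ‖Q.coeff k‖^2 * r^(2*k) : ℝ) : ℂ) := by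
    rw [← intervalIntegral.integral_ofReal]
    exact hval
  exact_mod_cast h2

lemma hconj (m : ℕ) (t : ℝ) : (starRingEnd ℂ) (Complex.exp (m*t*Complex.I))
    = Complex.exp (-((m:ℂ)*t*Complex.I)) := by
  rw [← Complex.exp_conj]
  congr 1
  simp only [map_mul, Complex.conj_I, Complex.conj_ofReal, map_natCast]
  ring

lemma bernstein_ineq (n : ℕ) (M : ℝ) (P : Polynomial ℂ) (hd : P.natDegree ≤ n)
    (hP : ∀ w : ℂ, ‖w‖ = 1 → ‖P.eval w‖ ≤ M) (z : ℂ) (hz : ‖z‖ = 1) :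
    ‖P.derivative.eval z‖ ≤ n * M := by
  set D : ℝ → ℂ := fun t => ∑ j ∈ Finset.range n, Complex.exp (j*t*Complex.I) with hD
  set f : ℝ → ℂ := fun t => P.eval (z * Complex.exp (-((t:ℂ)*Complex.I))) *
      Complex.exp ((n:ℂ)*t*Complex.I) * ((Complex.normSq (D t) : ℝ) : ℂ) with hf
  set m : ℕ → ℕ → ℕ → ℤ := fun k j l => (n:ℤ)+j-k-l with hm
  have hDcont : Continuous D := by
    apply continuous_finset_sum
    intro j _
    fun_prop
  have hfcont : Continuous f := by
    apply Continuous.mul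
    apply Continuous.mul
    · exact P.continuous_aeval.comp (by fun_prop)
    · fun_prop
    · exact Complex.continuous_ofReal.comp (Complex.continuous_normSq.comp hDcont)
  -- pointwise expansion
  have hfe : ∀ t : ℝ, f t = ∑ k ∈ Finset.range (n+1), ∑ j ∈ Finset.range n,
      ∑ l ∈ Finset.range n,
        (P.coeff k * z^k) * Complex.exp ((m k j l : ℂ) * t * Complex.I) := by
    intro t
    rw [hf]
    simp only
    have hns : ((Complex.normSq (D t) : ℝ) : ℂ) = ∑ j ∈ Finset.range n, ∑ l ∈ Finset.range n,
        Complex.exp (j*t*Complex.I) * Complex.exp (-((l:ℂ)*t*Complex.I)) := by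
      rw [← Complex.mul_conj, hD]
      simp only
      rw [map_sum, Finset.sum_mul_sum]
      exact Finset.sum_congr rfl fun j _ => Finset.sum_congr rfl fun l _ => by rw [hconj]
    rw [hns, Polynomial.eval_eq_sum_range' (lt_of_le_of_lt hd (Nat.lt_succ_self n)),
      Finset.sum_mul, Finset.sum_mul]
    refine Finset.sum_congr rfl fun k hk => ?_
    rw [Finset.mul_sum]
    refine Finset.sum_congr rfl fun j hj => ?_
    rw [Finset.mul_sum]
    refine Finset.sum_congr rfl fun l hl => ?_
    trans (P.coeff k * z^k) * (Complex.exp ((k:ℂ) * (-((t:ℂ)*Complex.I))) *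
      (Complex.exp ((n:ℂ)*t*Complex.I) * (Complex.exp ((j:ℂ)*t*Complex.I) *
        Complex.exp (-((l:ℂ)*t*Complex.I)))))
    · rw [mul_pow, ← Complex.exp_nat_mul]
      ring
    · simp only [← Complex.exp_add]
      congr 1
      rw [hm]
      push_cast
      ring
  have he : ∀ (a : ℕ), Continuous fun t : ℝ => Complex.exp (a*t*Complex.I) := fun a => by
    fun_prop
  -- derivative as a sum
  have hd1 : P.derivative.natDegree < n+1 :=
    lt_of_le_of_lt (le_trans (Polynomial.natDegree_derivative_le P) (by omega)) (Nat.lt_succ_self n)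
  have hPd : P.derivative.eval z = ∑ k ∈ Finset.range (n+1), (P.coeff (k+1) * (k+1)) * z^k := by
    rw [Polynomial.eval_eq_sum_range' hd1]
    exact Finset.sum_congr rfl fun k _ => by rw [Polynomial.coeff_derivative]
  have hderiv : z * P.derivative.eval z
      = ∑ k ∈ Finset.range (n+1), (k:ℂ) * (P.coeff k * z^k) := by
    rw [hPd, Finset.mul_sum]
    rw [Finset.sum_range_succ' (fun k => (k:ℂ) * (P.coeff k * z^k)) n]
    rw [Finset.sum_range_succ (fun k => z * (P.coeff (k+1) * (k+1) * z^k)) n]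
    rw [Polynomial.coeff_eq_zero_of_natDegree_lt (lt_of_le_of_lt hd (Nat.lt_succ_self n))]
    simp only [zero_mul, mul_zero, add_zero, Nat.cast_zero, zero_add]
    refine Finset.sum_congr rfl fun i _ => ?_
    push_cast
    ring
  -- the key identity
  have key : (∫ t in (0:ℝ)..(2*π), f t) = (2*π : ℂ) * (z * P.derivative.eval z) := by
    have hterm_cont : ∀ (k j l : ℕ), Continuous (fun t : ℝ =>
        (P.coeff k * z^k) * Complex.exp ((m k j l : ℂ) * t * Complex.I)) := by
      intro k j l
      fun_prop
    have h1 : (∫ t in (0:ℝ)..(2*π), f t)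
        = ∑ k ∈ Finset.range (n+1), ∑ j ∈ Finset.range n, ∑ l ∈ Finset.range n,
            (P.coeff k * z^k) *
              ∫ t in (0:ℝ)..(2*π), Complex.exp ((m k j l : ℂ) * t * Complex.I) := by
      simp_rw [hfe]
      rw [intervalIntegral.integral_finset_sum]
      · refine Finset.sum_congr rfl fun k _ => ?_
        rw [intervalIntegral.integral_finset_sum]
        · refine Finset.sum_congr rfl fun j _ => ?_
          rw [intervalIntegral.integral_finset_sum]
          · exact Finset.sum_congr rfl fun l _ => intervalIntegral.integral_const_mul _ _
          · exact fun l _ => (hterm_cont k j l).intervalIntegrable _ _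
        · exact fun j _ =>
            (continuous_finset_sum _ fun l _ => hterm_cont k j l).intervalIntegrable _ _
      · exact fun k _ => (continuous_finset_sum _ fun j _ =>
          continuous_finset_sum _ fun l _ => hterm_cont k j l).intervalIntegrable _ _
    rw [h1]
    simp_rw [intexp]
    have hsum : ∀ k ∈ Finset.range (n+1),
        (∑ j ∈ Finset.range n, ∑ l ∈ Finset.range n,
          (P.coeff k * z^k) * (if m k j l = 0 then (2*π:ℂ) else 0))
        = (k:ℂ) * (P.coeff k * z^k) * (2*π) := by
      intro k hk
      rw [Finset.mem_range] at hk
      have hin : ∀ j ∈ Finset.range n,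
          (∑ l ∈ Finset.range n, (P.coeff k * z^k) * (if m k j l = 0 then (2*π:ℂ) else 0))
          = (P.coeff k * z^k) * (if j < k then (2*π:ℂ) else 0) := by
        intro j hj
        rw [Finset.mem_range] at hj
        rw [← Finset.mul_sum]
        congr 1
        by_cases h : j < k
        · rw [if_pos h, Finset.sum_eq_single (n+j-k)]
          · exact if_pos (by simp only [hm]; omega)
          · intro l hl' hne
            exact if_neg (by simp only [hm]; have := Finset.mem_range.1 hl'; omega)
          · intro habs
            exact absurd (Finset.mem_range.2 (by omega)) habs
        · rw [if_neg h]
          exact Finset.sum_eq_zero fun l hl' =>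
            if_neg (by simp only [hm]; have := Finset.mem_range.1 hl'; omega)
      rw [Finset.sum_congr rfl hin, ← Finset.mul_sum]
      have hjs : (∑ j ∈ Finset.range n, if j < k then (2*π:ℂ) else 0) = (k:ℂ) * (2*π) := by
        rw [← Finset.sum_subset (Finset.range_subset_range.2 (by omega : k ≤ n))
            (fun x _ hx => if_neg (by simpa using hx))]
        rw [Finset.sum_congr rfl (fun j hj => if_pos (Finset.mem_range.1 hj)),
          Finset.sum_const, Finset.card_range]
        simp [nsmul_eq_mul]
      rw [hjs]
      ring
    rw [Finset.sum_congr rfl hsum, ← Finset.sum_mul, ← hderiv]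
    ring
  -- the L¹ norm of the kernel
  have hDn : (∫ t in (0:ℝ)..(2*π), Complex.normSq (D t)) = n * (2*π) := by
    have hpt : ∀ t : ℝ, ((Complex.normSq (D t) : ℝ) : ℂ)
        = ∑ j ∈ Finset.range n, ∑ l ∈ Finset.range n,
            Complex.exp (j*t*Complex.I) * (starRingEnd ℂ) (Complex.exp (l*t*Complex.I)) := by
      intro t
      rw [← Complex.mul_conj, hD]
      simp only
      rw [map_sum, Finset.sum_mul_sum]
    have hcc : ∀ (j l : ℕ), Continuous (fun t : ℝ =>
        Complex.exp (j*t*Complex.I) * (starRingEnd ℂ) (Complex.exp (l*t*Complex.I))) :=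
      fun j l => (he j).mul (continuous_star.comp (he l))
    have hcx : ((∫ t in (0:ℝ)..(2*π), Complex.normSq (D t) : ℝ) : ℂ) = (((n : ℝ) * (2*π) : ℝ) : ℂ) := by
      rw [← intervalIntegral.integral_ofReal]
      simp_rw [hpt]
      rw [intervalIntegral.integral_finset_sum]
      · have : ∀ j ∈ Finset.range n, (∑ l ∈ Finset.range n,
            ∫ t in (0:ℝ)..(2*π), Complex.exp (j*t*Complex.I) *
              (starRingEnd ℂ) (Complex.exp (l*t*Complex.I))) = (2*π:ℂ) := by
          intro j hj
          have : ∀ l ∈ Finset.range n, (∫ t in (0:ℝ)..(2*π), Complex.exp (j*t*Complex.I) *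
              (starRingEnd ℂ) (Complex.exp (l*t*Complex.I))) = if j = l then (2*π:ℂ) else 0 :=
            fun l _ => orth j l
          rw [Finset.sum_congr rfl this, Finset.sum_ite_eq, if_pos hj]
        have h2 : ∀ j ∈ Finset.range n, (∫ t in (0:ℝ)..(2*π), ∑ l ∈ Finset.range n,
            Complex.exp (j*t*Complex.I) * (starRingEnd ℂ) (Complex.exp (l*t*Complex.I)))
            = (2*π:ℂ) := by
          intro j hj
          rw [intervalIntegral.integral_finset_sum (fun l _ => (hcc j l).intervalIntegrable _ _)]
          exact this j hj
        rw [Finset.sum_congr rfl h2, Finset.sum_const, Finset.card_range]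
        push_cast
        ring
      · exact fun j _ =>
          (continuous_finset_sum _ fun l _ => hcc j l).intervalIntegrable _ _
    exact_mod_cast hcx
  -- norm estimate
  have hbound : ‖∫ t in (0:ℝ)..(2*π), f t‖ ≤ M * ((n:ℝ) * (2*π)) := by
    have h1 : ‖∫ t in (0:ℝ)..(2*π), f t‖ ≤ ∫ t in (0:ℝ)..(2*π), ‖f t‖ :=
      intervalIntegral.norm_integral_le_integral_norm (by positivity)
    refine h1.trans ?_
    have h2 : (∫ t in (0:ℝ)..(2*π), ‖f t‖)
        ≤ ∫ t in (0:ℝ)..(2*π), M * Complex.normSq (D t) := by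
      apply intervalIntegral.integral_mono_on (by positivity)
        (hfcont.norm.intervalIntegrable _ _)
        ((continuous_const.mul (Complex.continuous_normSq.comp hDcont)).intervalIntegrable _ _)
      intro t ht
      rw [hf]
      simp only
      rw [norm_mul, norm_mul]
      have e1 : ‖Complex.exp ((n:ℂ)*t*Complex.I)‖ = 1 := by
        rw [Complex.norm_exp]
        simp
      have e2 : ‖((Complex.normSq (D t):ℝ):ℂ)‖ = Complex.normSq (D t) := by
        rw [Complex.norm_real, Real.norm_eq_abs, _root_.abs_of_nonneg (Complex.normSq_nonneg _)]
      rw [e1, e2, mul_one]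
      apply mul_le_mul_of_nonneg_right _ (Complex.normSq_nonneg _)
      apply hP
      rw [norm_mul, hz, one_mul, Complex.norm_exp]
      simp
    refine h2.trans ?_
    rw [intervalIntegral.integral_const_mul, hDn]
  -- conclude
  have hfinal : (2*π) * ‖P.derivative.eval z‖ ≤ M * ((n:ℝ) * (2*π)) := by
    have hnn : ‖(2*π : ℂ) * (z * P.derivative.eval z)‖ = (2*π) * ‖P.derivative.eval z‖ := by
      have hre : (2*π : ℂ) * (z * P.derivative.eval z)
          = ((2*π:ℝ):ℂ) * (z * P.derivative.eval z) := by push_cast; ring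
      rw [hre, norm_mul, norm_mul, hz, one_mul, Complex.norm_real, Real.norm_eq_abs,
        abs_of_pos (by positivity)]
    calc (2*π) * ‖P.derivative.eval z‖ = ‖∫ t in (0:ℝ)..(2*π), f t‖ := by rw [key, hnn]
      _ ≤ M * ((n:ℝ) * (2*π)) := hbound
  have hrw : M * ((n:ℝ) * (2*π)) = (2*π) * ((n:ℝ) * M) := by ring
  rw [hrw] at hfinal
  exact le_of_mul_le_mul_left hfinal (by positivity)

lemma bern_iter (k : ℕ) : ∀ (n : ℕ) (M : ℝ) (P : Polynomial ℂ), P.natDegree ≤ n →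
    (∀ w : ℂ, ‖w‖ = 1 → ‖P.eval w‖ ≤ M) →
    ∀ z : ℂ, ‖z‖ = 1 → ‖(Polynomial.derivative^[k] P).eval z‖ ≤ n.descFactorial k * M := by
  induction k with
  | zero =>
    intro n M P hd hP z hz
    simpa using hP z hz
  | succ k ih =>
    intro n M P hd hP z hz
    rw [Function.iterate_succ_apply]
    rcases n with _ | m
    · rw [Nat.le_zero] at hd
      obtain ⟨a, rfl⟩ := Polynomial.natDegree_eq_zero.1 hd
      simp [Polynomial.derivative_C, Polynomial.iterate_derivative_zero,
        Nat.zero_descFactorial_succ]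
    · have hb : ∀ w : ℂ, ‖w‖ = 1 → ‖(Polynomial.derivative P).eval w‖ ≤ ((m+1 : ℕ) : ℝ) * M :=
        fun w hw => by exact_mod_cast bernstein_ineq (m+1) M P hd hP w hw
      have hd' : (Polynomial.derivative P).natDegree ≤ m :=
        le_trans (Polynomial.natDegree_derivative_le P) (by omega)
      have hih := ih m (((m+1 : ℕ) : ℝ) * M) (Polynomial.derivative P) hd' hb z hz
      refine hih.trans (le_of_eq ?_)
      rw [Nat.succ_descFactorial_succ]
      push_cast
      ring

lemma coeff_bound (n : ℕ) (P : Polynomial ℂ) (hd : P.natDegree ≤ n)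
    (hP : ∀ w : ℂ, ‖w‖ = 1 → ‖P.eval w‖ ≤ 1) (z : ℂ) (hz : ‖z‖ = 1) (k : ℕ) :
    ‖(Polynomial.taylor z P).coeff k‖ ≤ n.choose k := by
  rw [Polynomial.taylor_coeff]
  have hh : (Nat.factorial k : ℂ) * (Polynomial.hasseDeriv k P).eval z
      = (Polynomial.derivative^[k] P).eval z := by
    have h2 := congrFun (Polynomial.factorial_smul_hasseDeriv (R := ℂ) k) P
    rw [LinearMap.smul_apply] at h2
    rw [← h2]
    simp [nsmul_eq_mul]
  have hbb := bern_iter k n 1 P hd hP z hz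
  rw [mul_one] at hbb
  have hkey : (Nat.factorial k : ℝ) * ‖(Polynomial.hasseDeriv k P).eval z‖
      ≤ (Nat.factorial k : ℝ) * (n.choose k : ℝ) := by
    calc (Nat.factorial k : ℝ) * ‖(Polynomial.hasseDeriv k P).eval z‖
        = ‖(Nat.factorial k : ℂ) * (Polynomial.hasseDeriv k P).eval z‖ := by
          rw [norm_mul, Complex.norm_natCast]
      _ = ‖(Polynomial.derivative^[k] P).eval z‖ := by rw [hh]
      _ ≤ (n.descFactorial k : ℝ) := hbb
      _ = (Nat.factorial k : ℝ) * (n.choose k : ℝ) := by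
          rw [Nat.descFactorial_eq_factorial_mul_choose]
          push_cast
          ring
  exact le_of_mul_le_mul_left hkey (by positivity)

/-- For every `r > 0` and every polynomial `P` of degree at most `n` with
sup norm at most `1` on the closed unit disk, and every `z` on the unit circle, the mean
value `(1/2π) ∫₀^{2π} |P(z + r e^{iθ})|² dθ` is at most `∑_{k=0}^n C(n,k)² r^{2k}`,
with equality for `P = X^n`. -/
theorem stmt0 (n : ℕ) (r : ℝ) (hr : 0 < r) :
    (∀ P : Polynomial ℂ, P.natDegree ≤ n →
      (∀ w : ℂ, ‖w‖ ≤ 1 → ‖P.eval w‖ ≤ 1) →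
      ∀ z : ℂ, ‖z‖ = 1 →
        (1 / (2 * π)) * (∫ θ in (0:ℝ)..(2 * π),
            ‖P.eval (z + (r : ℂ) * Complex.exp (θ * Complex.I))‖ ^ 2)
          ≤ ∑ k ∈ Finset.range (n + 1), (n.choose k : ℝ) ^ 2 * r ^ (2 * k)) ∧
    (∀ z : ℂ, ‖z‖ = 1 →
      (1 / (2 * π)) * (∫ θ in (0:ℝ)..(2 * π),
          ‖(Polynomial.X ^ n : Polynomial ℂ).eval (z + (r : ℂ) * Complex.exp (θ * Complex.I))‖ ^ 2)
        = ∑ k ∈ Finset.range (n + 1), (n.choose k : ℝ) ^ 2 * r ^ (2 * k)) := by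
  have hπ : (0:ℝ) < 2*π := by positivity
  constructor
  · intro P hdP hP z hz
    have hP1 : ∀ w : ℂ, ‖w‖ = 1 → ‖P.eval w‖ ≤ 1 := fun w hw => hP w (le_of_eq hw)
    have hQd : (Polynomial.taylor z P).natDegree ≤ n := by
      rw [Polynomial.natDegree_taylor]; exact hdP
    have heval : ∀ θ : ℝ, (Polynomial.taylor z P).eval ((r:ℂ) * Complex.exp (θ*Complex.I))
        = P.eval (z + (r:ℂ) * Complex.exp (θ*Complex.I)) := by
      intro θ
      rw [Polynomial.taylor_apply, Polynomial.eval_comp]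
      simp [add_comm]
    have hps := parseval (Polynomial.taylor z P) n hQd r
    simp_rw [← heval]
    rw [hps]
    rw [show (1/(2*π)) * (2*π * ∑ k ∈ Finset.range (n+1),
        ‖(Polynomial.taylor z P).coeff k‖^2 * r^(2*k))
      = ∑ k ∈ Finset.range (n+1), ‖(Polynomial.taylor z P).coeff k‖^2 * r^(2*k) from by
        field_simp]
    apply Finset.sum_le_sum
    intro k _
    have hcb := coeff_bound n P hdP hP1 z hz k
    have h2 : ‖(Polynomial.taylor z P).coeff k‖^2 ≤ (n.choose k : ℝ)^2 :=
      pow_le_pow_left₀ (norm_nonneg _) hcb 2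
    exact mul_le_mul_of_nonneg_right h2 (by positivity)
  · intro z hz
    have hQd : (Polynomial.taylor z (Polynomial.X^n : Polynomial ℂ)).natDegree ≤ n := by
      rw [Polynomial.natDegree_taylor, Polynomial.natDegree_X_pow]
    have heval : ∀ θ : ℝ,
        (Polynomial.taylor z (Polynomial.X^n : Polynomial ℂ)).eval
          ((r:ℂ) * Complex.exp (θ*Complex.I))
        = (Polynomial.X^n : Polynomial ℂ).eval (z + (r:ℂ) * Complex.exp (θ*Complex.I)) := by
      intro θ
      rw [Polynomial.taylor_apply, Polynomial.eval_comp]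
      simp [add_comm]
    have hcoef : ∀ k : ℕ, ‖(Polynomial.taylor z (Polynomial.X^n : Polynomial ℂ)).coeff k‖
        = (n.choose k : ℝ) := by
      intro k
      rw [Polynomial.taylor_coeff, Polynomial.X_pow_eq_monomial, Polynomial.hasseDeriv_monomial,
        Polynomial.eval_monomial]
      rw [mul_one, norm_mul, norm_pow, hz, one_pow, mul_one, Complex.norm_natCast]
    have hps := parseval (Polynomial.taylor z (Polynomial.X^n : Polynomial ℂ)) n hQd r
    simp_rw [← heval]
    rw [hps]
    rw [show ∀ S : ℝ, (1/(2*π)) * (2*π * S) = S from fun S => by field_simp]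
    exact Finset.sum_congr rfl fun k _ => by rw [hcoef]
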